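/- Let d ≥ 3, m ≥ 1, ω ∈ Ω_{d,m}, and ξ, η ∈ X^ℕ. Then Γ_ξ and Γ_η are isomorphic as unrooted, undirected, unlabeled graphs (i.e. there is a bijection Cof(ξ) → Cof(η) preserving edge multiplicities, with no condition on roots) if and only if there exists η' ∈ Cof(η) such that ξ ∼ η'. -/

import Mathlib

open MeasureTheory

noncomputable section

/-- The boundary of the `d`-regular rooted tree: infinite words over `X = {0,…,d-1}`,
identified with `ZMod d`. -/
abbrev Bd (d : ℕ) : Type := ℕ → ZMod d
/-- The rooted automorphism `a`: adds 1 (mod `d`) to the first letter. -/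
def aMap (d : ℕ) (ξ : Bd d) : Bd d := fun n => if n = 0 then ξ 0 + 1 else ξ n

open scoped Classical in
/-- The spinal automorphism `b_ω`: if `ξ` starts with `(d-1)^r 0`, add `ω r b` to the
letter at position `r + 1`; otherwise fix `ξ`. -/
def bMap (d m : ℕ) (ω : ℕ → ((Fin m → ZMod d) →+ ZMod d)) (b : Fin m → ZMod d)
    (ξ : Bd d) : Bd d := fun n =>
  if n ≠ 0 ∧ (∀ i, i < n - 1 → ξ i = (d : ZMod d) - 1) ∧ ξ (n - 1) = 0 then
    ξ n + ω (n - 1) b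
  else ξ n
/-- The spinal generating set `S = {a^j : 1 ≤ j ≤ d-1} ∪ {b_ω : b ∈ B ∖ {0}}`,
as a set of self-maps of the boundary. -/
def genSet (d m : ℕ) (ω : ℕ → ((Fin m → ZMod d) →+ ZMod d)) : Set (Bd d → Bd d) :=
  {f | ∃ j, 1 ≤ j ∧ j ≤ d - 1 ∧ f = (aMap d)^[j]} ∪ {f | ∃ b, b ≠ 0 ∧ f = bMap d m ω b}
/-- Membership in `Ω_{d,m}`: all `ω_n` are surjective and `⋂_{j ≥ i} ker ω_j = {0}`
for every `i ≥ 0`. -/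
def InOmega (d m : ℕ) (ω : ℕ → ((Fin m → ZMod d) →+ ZMod d)) : Prop :=
  (∀ n, Function.Surjective (ω n)) ∧
  ∀ i : ℕ, ∀ b : Fin m → ZMod d, (∀ j, i ≤ j → ω j b = 0) → b = 0
/-- Two boundary points are cofinal if they agree at all sufficiently large positions. -/
def Cofinal {d : ℕ} (ξ η : Bd d) : Prop := ∃ N, ∀ n, N ≤ n → ξ n = η n

/-- The cofinality class of `ξ`. -/
def Cof {d : ℕ} (ξ : Bd d) : Set (Bd d) := {η | Cofinal ξ η}

theorem self_mem_Cof {d : ℕ} (ξ : Bd d) : ξ ∈ Cof ξ := ⟨0, fun _ _ => rfl⟩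
/-- Edge multiplicity in the Schreier graph `Γ_ξ`:
`mult(u, v) = card {s ∈ S : s · u = v}`. -/
def mult (d m : ℕ) (ω : ℕ → ((Fin m → ZMod d) →+ ZMod d)) (u v : Bd d) : ℕ :=
  Nat.card {f : Bd d → Bd d // f ∈ genSet d m ω ∧ f u = v}
/-- `ξ` has at least `r` consecutive letters `d-1` immediately before position `p`
(i.e. the block of `ξ` preceding position `p` ends in `(d-1)^r`). -/
def EndsIn (d : ℕ) (ξ : Bd d) (p r : ℕ) : Prop :=
  r ≤ p ∧ ∀ i, p - r ≤ i → i < p → ξ i = (d : ZMod d) - 1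

/-- Compatibility `ξ ∼ η`: zeros at exactly the same positions, and before each zero the
maximal runs of the letter `d-1` have the same length (equivalently, the corresponding
finite blocks end in `(d-1)^r` for exactly the same `r`'s). -/
def Compatible (d : ℕ) (ξ η : Bd d) : Prop :=
  (∀ n, ξ n = 0 ↔ η n = 0) ∧
  ∀ p, ξ p = 0 → ∀ r, (EndsIn d ξ p r ↔ EndsIn d η p r)
namespace SpinalAux

variable {d m : ℕ} {ω : ℕ → ((Fin m → ZMod d) →+ ZMod d)}

/-! ### Letter arithmetic -/

lemma dcast_sub_one (hd : 3 ≤ d) : (d : ZMod d) - 1 = -1 := by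
  rw [ZMod.natCast_self, zero_sub]

lemma one_ne_zero' (hd : 3 ≤ d) : (1 : ZMod d) ≠ 0 := by
  intro h
  have h1 : ((1 : ℕ) : ZMod d) = 0 := by rw [Nat.cast_one]; exact h
  have := Nat.le_of_dvd one_pos ((ZMod.natCast_eq_zero_iff 1 d).1 h1)
  omega

lemma neg_one_ne_zero' (hd : 3 ≤ d) : (-1 : ZMod d) ≠ 0 := by
  intro h
  exact one_ne_zero' hd (neg_eq_zero.1 h)

lemma one_ne_neg_one' (hd : 3 ≤ d) : (1 : ZMod d) ≠ -1 := by
  intro h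
  have h2 : ((2 : ℕ) : ZMod d) = 0 := by
    rw [Nat.cast_two]; linear_combination h
  have := Nat.le_of_dvd two_pos ((ZMod.natCast_eq_zero_iff 2 d).1 h2)
  omega

/-! ### Spines -/

def SpineAt (u : Bd d) (r : ℕ) : Prop := (∀ i, i < r → u i = -1) ∧ u r = 0

def Spine (u : Bd d) : Prop := ∃ r, SpineAt u r

lemma SpineAt.unique (hd : 3 ≤ d) {u : Bd d} {r s : ℕ}
    (h : SpineAt u r) (h' : SpineAt u s) : r = s := by
  rcases lt_trichotomy r s with hlt | he | hlt
  · exact absurd (h.2.symm.trans (h'.1 r hlt)).symm (neg_one_ne_zero' hd)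
  · exact he
  · exact absurd (h'.2.symm.trans (h.1 s hlt)).symm (neg_one_ne_zero' hd)

lemma SpineAt.first_letter (hd : 3 ≤ d) {u : Bd d} {r : ℕ} (h : SpineAt u r) :
    u 0 = 0 ∨ u 0 = -1 := by
  rcases Nat.eq_zero_or_pos r with rfl | hr
  · exact Or.inl h.2
  · exact Or.inr (h.1 0 hr)

lemma not_spine_of_one (hd : 3 ≤ d) {u : Bd d} (h : u 0 = 1) : ¬ Spine u := by
  rintro ⟨r, hr⟩
  rcases hr.first_letter hd with h0 | h0
  · exact one_ne_zero' hd (h ▸ h0)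
  · exact one_ne_neg_one' hd (h ▸ h0)

/-! ### `bMap` and `aMap` rewriting -/

lemma bMap_of_spineAt (hd : 3 ≤ d) {u : Bd d} {r : ℕ} (hr : SpineAt u r)
    (b : Fin m → ZMod d) :
    bMap d m ω b u = Function.update u (r+1) (u (r+1) + ω r b) := by
  funext n
  by_cases hn : n = r + 1
  · subst hn
    rw [Function.update_self]
    have hc : r + 1 ≠ 0 ∧ (∀ i, i < (r+1) - 1 → u i = (d : ZMod d) - 1) ∧
        u ((r+1) - 1) = 0 := by
      refine ⟨Nat.succ_ne_zero r, ?_, ?_⟩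
      · intro i hi
        rw [dcast_sub_one hd]
        exact hr.1 i (by omega)
      · simpa using hr.2
    simp only [bMap, if_pos hc]
    simp
  · rw [Function.update_of_ne hn]
    have hc : ¬ (n ≠ 0 ∧ (∀ i, i < n - 1 → u i = (d : ZMod d) - 1) ∧ u (n - 1) = 0) := by
      rintro ⟨h0, h1, h2⟩
      have : SpineAt u (n-1) := by
        constructor
        · intro i hi
          rw [← dcast_sub_one hd]; exact h1 i hi
        · exact h2
      have := this.unique hd hr
      omega
    simp only [bMap, if_neg hc]

lemma bMap_of_not_spine (hd : 3 ≤ d) {u : Bd d} (h : ¬ Spine u) (b : Fin m → ZMod d) :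
    bMap d m ω b u = u := by
  funext n
  have hc : ¬ (n ≠ 0 ∧ (∀ i, i < n - 1 → u i = (d : ZMod d) - 1) ∧ u (n - 1) = 0) := by
    rintro ⟨h0, h1, h2⟩
    exact h ⟨n - 1, fun i hi => by rw [← dcast_sub_one hd]; exact h1 i hi, h2⟩
  simp only [bMap, if_neg hc]

lemma aIter (j : ℕ) (u : Bd d) :
    (aMap d)^[j] u = fun n => if n = 0 then u 0 + (j : ZMod d) else u n := by
  induction j with
  | zero =>
      funext n
      by_cases hn : n = 0 <;> simp [hn]
  | succ j ih =>
      rw [Function.iterate_succ_apply', ih]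
      funext n
      simp only [aMap]
      by_cases hn : n = 0 <;> simp [hn] <;> push_cast <;> ring

lemma aIter_eq_iff {j : ℕ} {u v : Bd d} :
    (aMap d)^[j] u = v ↔ (u 0 + (j : ZMod d) = v 0 ∧ ∀ n, n ≠ 0 → u n = v n) := by
  rw [aIter, funext_iff]
  constructor
  · intro h
    refine ⟨by simpa using h 0, fun n hn => by simpa [hn] using h n⟩
  · rintro ⟨h0, h⟩ n
    by_cases hn : n = 0 <;> simp [hn, h0]
    exact h n hn

/-! ### Edges -/

def AEdge (u v : Bd d) : Prop := u 0 ≠ v 0 ∧ ∀ n, n ≠ 0 → u n = v n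

def BEdgeAt (u v : Bd d) (r : ℕ) : Prop :=
  SpineAt u r ∧ u (r+1) ≠ v (r+1) ∧ ∀ n, n ≠ r + 1 → u n = v n

def BEdge (u v : Bd d) : Prop := ∃ r, BEdgeAt u v r

lemma AEdge.symm {u v : Bd d} (h : AEdge u v) : AEdge v u :=
  ⟨h.1.symm, fun n hn => (h.2 n hn).symm⟩

lemma BEdgeAt.spineAt_other {u v : Bd d} {r : ℕ} (h : BEdgeAt u v r) : SpineAt v r := by
  refine ⟨fun i hi => ?_, ?_⟩
  · rw [← h.2.2 i (by omega)]; exact h.1.1 i hi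
  · rw [← h.2.2 r (by omega)]; exact h.1.2

lemma BEdgeAt.symm {u v : Bd d} {r : ℕ} (h : BEdgeAt u v r) : BEdgeAt v u r :=
  ⟨h.spineAt_other, h.2.1.symm, fun n hn => (h.2.2 n hn).symm⟩

lemma BEdge.symm {u v : Bd d} (h : BEdge u v) : BEdge v u := by
  obtain ⟨r, hr⟩ := h; exact ⟨r, hr.symm⟩

lemma AEdge.ne {u v : Bd d} (h : AEdge u v) : u ≠ v := fun he => h.1 (by rw [he])

lemma BEdge.ne {u v : Bd d} (h : BEdge u v) : u ≠ v := by
  obtain ⟨r, hr⟩ := h; exact fun he => hr.2.1 (by rw [he])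

lemma not_AEdge_and_BEdge {u v : Bd d} (ha : AEdge u v) (hb : BEdge u v) : False := by
  obtain ⟨r, hr⟩ := hb
  exact hr.2.1 (ha.2 (r+1) (Nat.succ_ne_zero r))

end SpinalAux
namespace SpinalAux

variable {d m : ℕ} {ω : ℕ → ((Fin m → ZMod d) →+ ZMod d)}

/-! ### Counting generators -/

def APart (d : ℕ) (u v : Bd d) : Type :=
  {j : ℕ // (1 ≤ j ∧ j ≤ d - 1) ∧ (aMap d)^[j] u = v}

def BPart (ω : ℕ → ((Fin m → ZMod d) →+ ZMod d)) (u v : Bd d) : Type :=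
  {b : Fin m → ZMod d // b ≠ 0 ∧ bMap d m ω b u = v}

lemma neZero_d (hd : 3 ≤ d) : NeZero d := ⟨by omega⟩

lemma finite_APart (hd : 3 ≤ d) (u v : Bd d) : Finite (APart d u v) := by
  refine Finite.of_injective (fun a => (⟨a.1, by have := a.2.1.2; omega⟩ : Fin d)) ?_
  intro a b h
  exact Subtype.ext (congrArg Fin.val h)

lemma finite_BPart (hd : 3 ≤ d) (u v : Bd d) : Finite (BPart ω u v) := by
  haveI := neZero_d hd
  exact Subtype.finite

lemma card_APart_of_AEdge (hd : 3 ≤ d) {u v : Bd d} (h : AEdge u v) :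
    Nat.card (APart d u v) = 1 := by
  haveI := neZero_d hd
  have hne : v 0 - u 0 ≠ 0 := sub_ne_zero.2 h.1.symm
  have hval : 1 ≤ (v 0 - u 0).val := by
    rcases Nat.eq_zero_or_pos (v 0 - u 0).val with h0 | h0
    · exact absurd ((ZMod.val_eq_zero _).1 h0) hne
    · exact h0
  have hvlt : (v 0 - u 0).val < d := ZMod.val_lt _
  haveI : Unique (APart d u v) := by
    refine ⟨⟨⟨(v 0 - u 0).val, ⟨hval, by omega⟩, ?_⟩⟩, ?_⟩
    · rw [aIter_eq_iff]
      refine ⟨?_, h.2⟩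
      rw [ZMod.natCast_zmod_val]
      ring
    · rintro ⟨j, ⟨hj1, hj2⟩, hj3⟩
      apply Subtype.ext
      rw [aIter_eq_iff] at hj3
      have : (j : ZMod d) = v 0 - u 0 := by linear_combination hj3.1
      have : ((j : ZMod d)).val = (v 0 - u 0).val := by rw [this]
      rwa [ZMod.val_cast_of_lt (by omega)] at this
  exact Nat.card_unique

lemma card_APart_of_not_AEdge (hd : 3 ≤ d) {u v : Bd d} (h : ¬ AEdge u v) :
    Nat.card (APart d u v) = 0 := by
  haveI : IsEmpty (APart d u v) := by
    constructor
    rintro ⟨j, ⟨hj1, hj2⟩, hj3⟩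
    rw [aIter_eq_iff] at hj3
    have h0 : u 0 = v 0 := by
      by_contra hne
      exact h ⟨hne, hj3.2⟩
    have : (j : ZMod d) = 0 := by linear_combination hj3.1 - h0
    have := Nat.le_of_dvd (by omega) ((ZMod.natCast_eq_zero_iff j d).1 this)
    omega
  exact Nat.card_of_isEmpty

lemma bMap_eq_iff_of_spineAt (hd : 3 ≤ d) {u v : Bd d} {r : ℕ} (hr : SpineAt u r)
    (hoff : ∀ n, n ≠ r + 1 → u n = v n) (b : Fin m → ZMod d) :
    bMap d m ω b u = v ↔ ω r b = v (r+1) - u (r+1) := by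
  rw [bMap_of_spineAt hd hr]
  constructor
  · intro hb
    have := congrFun hb (r+1)
    rw [Function.update_self] at this
    linear_combination this
  · intro hb
    funext n
    by_cases hn : n = r + 1
    · subst hn; rw [Function.update_self, hb]; ring
    · rw [Function.update_of_ne hn]; exact hoff n hn

lemma card_BPart_not_spine_self (hd : 3 ≤ d) {u v : Bd d} (h : ¬ Spine u) (huv : u = v) :
    Nat.card (BPart ω u v) = Nat.card {b : Fin m → ZMod d // b ≠ 0} := by
  subst huv
  apply Nat.card_congr
  apply Equiv.subtypeEquivRight
  intro b
  simp [bMap_of_not_spine hd h]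

lemma card_BPart_not_spine_ne (hd : 3 ≤ d) {u v : Bd d} (h : ¬ Spine u) (huv : u ≠ v) :
    Nat.card (BPart ω u v) = 0 := by
  haveI : IsEmpty (BPart ω u v) :=
    ⟨by rintro ⟨b, hb, he⟩; rw [bMap_of_not_spine hd h] at he; exact huv he⟩
  exact Nat.card_of_isEmpty

lemma card_BPart_spine_off (hd : 3 ≤ d) {u v : Bd d} {r : ℕ} (hr : SpineAt u r)
    (hoff : ∀ n, n ≠ r + 1 → u n = v n) :
    Nat.card (BPart ω u v) =
      Nat.card {b : Fin m → ZMod d // b ≠ 0 ∧ ω r b = v (r+1) - u (r+1)} := by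
  apply Nat.card_congr
  apply Equiv.subtypeEquivRight
  intro b
  rw [bMap_eq_iff_of_spineAt hd hr hoff]

lemma card_BPart_spine_not_off (hd : 3 ≤ d) {u v : Bd d} {r : ℕ} (hr : SpineAt u r)
    (hoff : ¬ ∀ n, n ≠ r + 1 → u n = v n) :
    Nat.card (BPart ω u v) = 0 := by
  haveI : IsEmpty (BPart ω u v) := by
    constructor
    rintro ⟨b, hb, he⟩
    rw [bMap_of_spineAt hd hr] at he
    apply hoff
    intro n hn
    rw [← he]
    rw [Function.update_of_ne hn]
  exact Nat.card_of_isEmpty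

/-! ### Injectivity of the generator encoding -/

lemma aIter_inj (hd : 3 ≤ d) {j j' : ℕ} (h1 : 1 ≤ j) (h2 : j ≤ d - 1)
    (h1' : 1 ≤ j') (h2' : j' ≤ d - 1) (h : (aMap d)^[j] = (aMap d)^[j']) : j = j' := by
  haveI := neZero_d hd
  have := congrFun (congrFun h (fun _ => (0 : ZMod d))) 0
  rw [aIter, aIter] at this
  norm_num at this
  have hc : (j : ZMod d) = (j' : ZMod d) := by linear_combination this
  have := congrArg ZMod.val hc
  rwa [ZMod.val_cast_of_lt (by omega), ZMod.val_cast_of_lt (by omega)] at this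

lemma aIter_ne_bMap (hd : 3 ≤ d) {j : ℕ} (h1 : 1 ≤ j) (h2 : j ≤ d - 1)
    (b : Fin m → ZMod d) : (aMap d)^[j] ≠ bMap d m ω b := by
  haveI := neZero_d hd
  intro h
  have hns : ¬ Spine (fun _ => (1 : ZMod d) : Bd d) := not_spine_of_one hd rfl
  have := congrFun (congrFun h (fun _ => (1 : ZMod d))) 0
  rw [aIter, bMap_of_not_spine hd hns] at this
  norm_num at this
  have hc : (j : ZMod d) = 0 := by linear_combination this
  have := Nat.le_of_dvd (by omega) ((ZMod.natCast_eq_zero_iff j d).1 hc)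
  omega

def spinePoint (d : ℕ) (r : ℕ) : Bd d := fun n => if n < r then -1 else 0

lemma spinePoint_spineAt (r : ℕ) : SpineAt (spinePoint d r) r := by
  constructor
  · intro i hi; simp [spinePoint, hi]
  · simp [spinePoint]

lemma bMap_inj (hd : 3 ≤ d) (hω : InOmega d m ω) {b b' : Fin m → ZMod d}
    (h : bMap d m ω b = bMap d m ω b') : b = b' := by
  have key : ∀ r, ω r b = ω r b' := by
    intro r
    have := congrFun (congrFun h (spinePoint d r)) (r+1)
    rw [bMap_of_spineAt hd (spinePoint_spineAt r), bMap_of_spineAt hd (spinePoint_spineAt r)]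
      at this
    rw [Function.update_self, Function.update_self] at this
    linear_combination this
  have : b - b' = 0 := by
    apply hω.2 0
    intro j _
    rw [map_sub, key j, sub_self]
  linear_combination this

/-! ### The decomposition of `mult` -/

def gEnc (d m : ℕ) (ω : ℕ → ((Fin m → ZMod d) →+ ZMod d)) (u v : Bd d) :
    APart d u v ⊕ BPart ω u v → {f : Bd d → Bd d // f ∈ genSet d m ω ∧ f u = v} :=
  Sum.elim
    (fun a => ⟨(aMap d)^[a.1], Or.inl ⟨a.1, a.2.1.1, a.2.1.2, rfl⟩, a.2.2⟩)
    (fun b => ⟨bMap d m ω b.1, Or.inr ⟨b.1, b.2.1, rfl⟩, b.2.2⟩)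

lemma mult_eq_parts (hd : 3 ≤ d) (hω : InOmega d m ω) (u v : Bd d) :
    mult d m ω u v = Nat.card (APart d u v) + Nat.card (BPart ω u v) := by
  haveI := neZero_d hd
  haveI := finite_APart hd u v
  haveI := finite_BPart (ω := ω) hd u v
  set g := gEnc d m ω u v with hg0
  have hinj : Function.Injective g := by
    rintro (⟨j, hj, he⟩ | ⟨b, hb, he⟩) (⟨j', hj', he'⟩ | ⟨b', hb', he'⟩) hg <;>
      simp only [hg0, gEnc, Sum.elim, Subtype.mk.injEq] at hg
    · exact congrArg Sum.inl (Subtype.ext (aIter_inj hd hj.1 hj.2 hj'.1 hj'.2 hg))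
    · exact absurd hg (aIter_ne_bMap hd hj.1 hj.2 b')
    · exact absurd hg.symm (aIter_ne_bMap hd hj'.1 hj'.2 b)
    · exact congrArg Sum.inr (Subtype.ext (bMap_inj hd hω hg))
  have hsurj : Function.Surjective g := by
    rintro ⟨f, hf | hf, hfu⟩
    · obtain ⟨j, h1, h2, rfl⟩ := hf
      exact ⟨Sum.inl ⟨j, ⟨h1, h2⟩, hfu⟩, rfl⟩
    · obtain ⟨b, hb, rfl⟩ := hf
      exact ⟨Sum.inr ⟨b, hb, hfu⟩, rfl⟩
  have : mult d m ω u v = Nat.card (APart d u v ⊕ BPart ω u v) :=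
    Nat.card_congr (Equiv.ofBijective g ⟨hinj, hsurj⟩).symm
  rw [this, Nat.card_sum]

end SpinalAux
namespace SpinalAux

variable {d m : ℕ} {ω : ℕ → ((Fin m → ZMod d) →+ ZMod d)}

/-! ### Loop counts and spine detection -/

lemma mult_self_spine (hd : 3 ≤ d) (hω : InOmega d m ω) {u : Bd d} {r : ℕ}
    (hr : SpineAt u r) :
    mult d m ω u u = Nat.card {b : Fin m → ZMod d // b ≠ 0 ∧ ω r b = 0} := by
  rw [mult_eq_parts hd hω,
    card_APart_of_not_AEdge hd (fun h => h.1 rfl),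
    card_BPart_spine_off hd hr (fun n _ => rfl)]
  simp

lemma mult_self_not_spine (hd : 3 ≤ d) (hω : InOmega d m ω) {u : Bd d}
    (h : ¬ Spine u) :
    mult d m ω u u = Nat.card {b : Fin m → ZMod d // b ≠ 0} := by
  rw [mult_eq_parts hd hω,
    card_APart_of_not_AEdge hd (fun h => h.1 rfl),
    card_BPart_not_spine_self hd h rfl]
  simp

lemma spine_mult_self_ne (hd : 3 ≤ d) (hω : InOmega d m ω) {u w : Bd d}
    (hs : Spine u) (hns : ¬ Spine w) : mult d m ω u u ≠ mult d m ω w w := by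
  classical
  haveI := neZero_d hd
  obtain ⟨r, hr⟩ := hs
  rw [mult_self_spine hd hω hr, mult_self_not_spine hd hω hns]
  rw [Nat.card_eq_fintype_card, Nat.card_eq_fintype_card]
  apply ne_of_lt
  obtain ⟨b₁, hb₁⟩ := hω.1 r 1
  have hb₁0 : b₁ ≠ 0 := by
    intro h; rw [h, map_zero] at hb₁; exact one_ne_zero' hd hb₁.symm
  apply Fintype.card_lt_of_injective_of_notMem
    (fun (x : {b : Fin m → ZMod d // b ≠ 0 ∧ ω r b = 0}) =>
      (⟨x.1, x.2.1⟩ : {b : Fin m → ZMod d // b ≠ 0}))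
    (fun x y h => Subtype.ext (by simpa using congrArg Subtype.val h)) (b := ⟨b₁, hb₁0⟩)
  rintro ⟨⟨x, hx1, hx2⟩, hx⟩
  have : x = b₁ := congrArg Subtype.val hx
  rw [this, hb₁] at hx2
  exact one_ne_zero' hd hx2

lemma spine_iff_spine_of_mult_self_eq (hd : 3 ≤ d) (hω : InOmega d m ω) {u w : Bd d}
    (h : mult d m ω u u = mult d m ω w w) : Spine u ↔ Spine w := by
  constructor
  · intro hs; by_contra hns; exact spine_mult_self_ne hd hω hs hns h
  · intro hs; by_contra hns; exact spine_mult_self_ne hd hω hs hns h.symm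

/-! ### Edge detection -/

lemma mult_pos_of_AEdge (hd : 3 ≤ d) (hω : InOmega d m ω) {u v : Bd d}
    (h : AEdge u v) : 0 < mult d m ω u v := by
  rw [mult_eq_parts hd hω, card_APart_of_AEdge hd h]
  omega

lemma mult_pos_of_BEdge (hd : 3 ≤ d) (hω : InOmega d m ω) {u v : Bd d}
    (h : BEdge u v) : 0 < mult d m ω u v := by
  obtain ⟨r, hr⟩ := h
  have hc : v (r+1) - u (r+1) ≠ 0 := sub_ne_zero.2 (Ne.symm hr.2.1)
  obtain ⟨b, hb⟩ := hω.1 r (v (r+1) - u (r+1))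
  have hb0 : b ≠ 0 := by
    intro h; rw [h, map_zero] at hb; exact hc hb.symm
  have hmem : bMap d m ω b u = v := by
    rw [bMap_eq_iff_of_spineAt hd hr.1 hr.2.2]
    exact hb
  haveI : Nonempty (BPart ω u v) := ⟨⟨b, hb0, hmem⟩⟩
  haveI := finite_BPart (ω := ω) hd u v
  rw [mult_eq_parts hd hω]
  have := Nat.card_pos (α := BPart ω u v)
  omega

lemma edge_of_mult_pos (hd : 3 ≤ d) (hω : InOmega d m ω) {u v : Bd d}
    (hne : u ≠ v) (h : 0 < mult d m ω u v) : AEdge u v ∨ BEdge u v := by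
  by_contra hcon
  push_neg at hcon
  rw [mult_eq_parts hd hω, card_APart_of_not_AEdge hd hcon.1] at h
  rcases Classical.em (Spine u) with ⟨r, hr⟩ | hns
  · by_cases hoff : ∀ n, n ≠ r + 1 → u n = v n
    · by_cases hval : u (r+1) = v (r+1)
      · exact hne (funext fun n => by
          by_cases hn : n = r + 1
          · rw [hn]; exact hval
          · exact hoff n hn)
      · exact hcon.2 ⟨r, hr, hval, hoff⟩
    · rw [card_BPart_spine_not_off hd hr hoff] at h
      omega
  · rcases Classical.em (u = v) with rfl | hne'
    · exact hne rfl
    · rw [card_BPart_not_spine_ne hd hns hne'] at h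
      omega

/-! ### Distinguishing `a`-edges from `b`-edges -/

lemma bedge_char (hd : 3 ≤ d) (hω : InOmega d m ω) {u v : Bd d}
    (hne : u ≠ v) (hpos : 0 < mult d m ω u v) :
    BEdge u v ↔ (Spine u ∧ Spine v ∧
      ∀ w, w ≠ u → w ≠ v → 0 < mult d m ω u w → 0 < mult d m ω v w → Spine w) := by
  constructor
  · rintro ⟨r, hr⟩
    refine ⟨⟨r, hr.1⟩, ⟨r, hr.spineAt_other⟩, ?_⟩
    intro w hwu hwv h1 h2
    rcases edge_of_mult_pos hd hω (Ne.symm hwu) h1 with ha1 | hb1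
    · rcases edge_of_mult_pos hd hω (Ne.symm hwv) h2 with ha2 | hb2
      · exact absurd ((ha1.2 (r+1) (Nat.succ_ne_zero r)).trans
          (ha2.2 (r+1) (Nat.succ_ne_zero r)).symm) hr.2.1
      · obtain ⟨s, hs⟩ := hb2
        have hsr : s = r := hs.1.unique hd hr.spineAt_other
        rw [hsr] at hs
        have e1 : v 0 = w 0 := hs.2.2 0 (by omega)
        have e2 : u 0 = v 0 := hr.2.2 0 (by omega)
        exact absurd (e2.trans e1) ha1.1
    · obtain ⟨s, hs⟩ := hb1
      have hsr : s = r := hs.1.unique hd hr.1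
      rw [hsr] at hs
      rcases edge_of_mult_pos hd hω (Ne.symm hwv) h2 with ha2 | hb2
      · have e1 : u 0 = w 0 := hs.2.2 0 (by omega)
        have e2 : u 0 = v 0 := hr.2.2 0 (by omega)
        exact absurd (e2.symm.trans e1) ha2.1
      · exact ⟨r, hs.spineAt_other⟩
  · rintro ⟨⟨ru, hru⟩, ⟨rv, hrv⟩, hall⟩
    rcases edge_of_mult_pos hd hω hne hpos with ha | hb
    · exfalso
      set w : Bd d := Function.update u 0 1 with hw
      have hw0 : w 0 = 1 := Function.update_self 0 1 u
      have hwoff : ∀ n, n ≠ 0 → w n = u n := fun n hn => Function.update_of_ne hn 1 u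
      have hu0 : u 0 = 0 ∨ u 0 = -1 := hru.first_letter hd
      have hv0 : v 0 = 0 ∨ v 0 = -1 := hrv.first_letter hd
      have h1u : u 0 ≠ 1 := by
        rcases hu0 with h | h <;> rw [h]
        · exact fun hh => one_ne_zero' hd hh.symm
        · exact fun hh => one_ne_neg_one' hd hh.symm
      have h1v : v 0 ≠ 1 := by
        rcases hv0 with h | h <;> rw [h]
        · exact fun hh => one_ne_zero' hd hh.symm
        · exact fun hh => one_ne_neg_one' hd hh.symm
      have haw : AEdge u w := ⟨by rw [hw0]; exact h1u, fun n hn => (hwoff n hn).symm⟩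
      have havw : AEdge v w :=
        ⟨by rw [hw0]; exact h1v, fun n hn => (ha.2 n hn).symm.trans (hwoff n hn).symm⟩
      exact not_spine_of_one hd hw0
        (hall w (fun hh => h1u (hh ▸ hw0)) (fun hh => h1v (hh ▸ hw0))
          (mult_pos_of_AEdge hd hω haw) (mult_pos_of_AEdge hd hω havw))
    · exact hb

end SpinalAux
namespace SpinalAux

variable {d m : ℕ} {ω : ℕ → ((Fin m → ZMod d) →+ ZMod d)}

/-! ### Tail equivalences -/

def EqF (p : ℕ) (u v : Bd d) : Prop := ∀ n, p ≤ n → u n = v n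

lemma EqF.refl (p : ℕ) (u : Bd d) : EqF p u u := fun _ _ => rfl
lemma EqF.symm' {p : ℕ} {u v : Bd d} (h : EqF p u v) : EqF p v u :=
  fun n hn => (h n hn).symm
lemma EqF.trans' {p : ℕ} {u v w : Bd d} (h : EqF p u v) (h' : EqF p v w) : EqF p u w :=
  fun n hn => (h n hn).trans (h' n hn)
lemma EqF.mono {p q : ℕ} (hpq : p ≤ q) {u v : Bd d} (h : EqF p u v) : EqF q u v :=
  fun n hn => h n (le_trans hpq hn)

lemma eqF_zero_iff {u v : Bd d} : EqF 0 u v ↔ u = v :=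
  ⟨fun h => funext fun n => h n (Nat.zero_le n), fun h => h ▸ EqF.refl 0 u⟩

lemma eqF_one_iff {u v : Bd d} : EqF 1 u v ↔ u = v ∨ AEdge u v := by
  constructor
  · intro h
    by_cases h0 : u 0 = v 0
    · refine Or.inl (funext fun n => ?_)
      rcases Nat.eq_zero_or_pos n with rfl | hn
      · exact h0
      · exact h n hn
    · exact Or.inr ⟨h0, fun n hn => h n (by omega)⟩
  · rintro (rfl | h)
    · exact EqF.refl 1 u
    · exact fun n hn => h.2 n (by omega)

lemma BEdgeAt.eqF {u v : Bd d} {r : ℕ} (h : BEdgeAt u v r) : EqF (r+2) u v :=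
  fun n hn => h.2.2 n (by omega)

lemma BEdgeAt.not_eqF {u v : Bd d} {r : ℕ} (h : BEdgeAt u v r) {p : ℕ} (hp : p ≤ r + 1) :
    ¬ EqF p u v := fun he => h.2.1 (he (r+1) (by omega))

lemma BEdgeAt.ge_of_not_eqF {u v : Bd d} {r : ℕ} (h : BEdgeAt u v r) {p : ℕ}
    (hp : ¬ EqF (p+1) u v) : p ≤ r := by
  by_contra hc
  exact hp (h.eqF.mono (by omega))

/-! ### Cofinality utilities -/

lemma Cofinal.refl' (u : Bd d) : Cofinal u u := ⟨0, fun _ _ => rfl⟩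
lemma Cofinal.symm' {u v : Bd d} (h : Cofinal u v) : Cofinal v u := by
  obtain ⟨N, hN⟩ := h; exact ⟨N, fun n hn => (hN n hn).symm⟩
lemma Cofinal.trans' {u v w : Bd d} (h : Cofinal u v) (h' : Cofinal v w) :
    Cofinal u w := by
  obtain ⟨N, hN⟩ := h; obtain ⟨M, hM⟩ := h'
  exact ⟨max N M, fun n hn => (hN n (le_trans (le_max_left _ _) hn)).trans
    (hM n (le_trans (le_max_right _ _) hn))⟩

lemma EqF.cofinal {p : ℕ} {u v : Bd d} (h : EqF p u v) : Cofinal u v := ⟨p, h⟩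

lemma AEdge.cofinal {u v : Bd d} (h : AEdge u v) : Cofinal u v :=
  ⟨1, fun n hn => h.2 n (by omega)⟩

lemma BEdge.cofinal {u v : Bd d} (h : BEdge u v) : Cofinal u v := by
  obtain ⟨r, hr⟩ := h; exact hr.eqF.cofinal

lemma mem_Cof_of_cofinal {ζ u v : Bd d} (hu : u ∈ Cof ζ) (h : Cofinal u v) :
    v ∈ Cof ζ := Cofinal.trans' hu h

/-! ### The level-detection formula -/

/-- The quotient-graph characterisation of level-`p` `b`-edges in terms of
`BEdge`, `Spine`, `EqF (p+1)` and the ambient cofinality class. -/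
lemma bedgeAt_char (hd : 3 ≤ d) {ζ : Bd d} (p : ℕ) (u v : ↥(Cof ζ)) :
    BEdgeAt (u : Bd d) (v : Bd d) p ↔
      (BEdge (u : Bd d) (v : Bd d) ∧ ¬ EqF (p+1) (u : Bd d) (v : Bd d) ∧
        ∃ w : ↥(Cof ζ), ((w : Bd d) = (u : Bd d) ∨ BEdge (u : Bd d) (w : Bd d)) ∧
          ∀ w₁ : ↥(Cof ζ), EqF (p+1) (w : Bd d) (w₁ : Bd d) → Spine (w₁ : Bd d) →
            (∃ w₂ : ↥(Cof ζ), BEdge (w₁ : Bd d) (w₂ : Bd d) ∧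
              ¬ EqF (p+1) (w₁ : Bd d) (w₂ : Bd d)) →
            ((w₁ : Bd d) = (u : Bd d) ∨ BEdge (u : Bd d) (w₁ : Bd d))) := by
  constructor
  · intro h
    refine ⟨⟨p, h⟩, h.not_eqF (le_refl _), ?_⟩
    set w0 : Bd d := Function.update (u : Bd d) (p+1) 1 with hw0def
    have hw0off : ∀ n, n ≠ p+1 → w0 n = (u : Bd d) n :=
      fun n hn => Function.update_of_ne hn 1 _
    have hw0val : w0 (p+1) = 1 := Function.update_self _ 1 _
    have hw0mem : w0 ∈ Cof ζ :=
      mem_Cof_of_cofinal u.2 ⟨p+2, fun n hn => (hw0off n (by omega)).symm⟩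
    refine ⟨⟨w0, hw0mem⟩, ?_, ?_⟩
    · show w0 = (u : Bd d) ∨ BEdge (u : Bd d) w0
      by_cases hval : (u : Bd d) (p+1) = 1
      · refine Or.inl (funext fun n => ?_)
        by_cases hn : n = p+1
        · rw [hn, hw0val, hval]
        · exact hw0off n hn
      · exact Or.inr ⟨p, h.1, by rw [hw0val]; exact hval, fun n hn => (hw0off n hn).symm⟩
    · intro w₁ h1 hsp hbig
      have h1' : EqF (p+1) w0 (w₁ : Bd d) := h1
      obtain ⟨ℓ, hℓ⟩ := hsp
      obtain ⟨w₂, hb2, hne2⟩ := hbig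
      obtain ⟨s, hs⟩ := hb2
      have hsℓ : s = ℓ := hs.1.unique hd hℓ
      rw [hsℓ] at hs
      have hpℓ : p ≤ ℓ := hs.ge_of_not_eqF hne2
      have hw₁p1 : (w₁ : Bd d) (p+1) = 1 := by
        rw [← h1' (p+1) (le_refl _)]; exact hw0val
      have hℓp : ℓ = p := by
        rcases Nat.lt_or_ge p ℓ with hlt | hge
        · exfalso
          rcases Nat.lt_or_ge (p+1) ℓ with hlt2 | hge2
          · have h2 := hℓ.1 (p+1) hlt2
            rw [hw₁p1] at h2
            exact one_ne_neg_one' hd h2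
          · have hpe : p + 1 = ℓ := by omega
            apply one_ne_zero' hd
            rw [← hw₁p1, hpe]
            exact hℓ.2
        · omega
      rw [hℓp] at hℓ
      show (w₁ : Bd d) = (u : Bd d) ∨ BEdge (u : Bd d) (w₁ : Bd d)
      by_cases hval : (w₁ : Bd d) (p+1) = (u : Bd d) (p+1)
      · refine Or.inl (funext fun n => ?_)
        by_cases hnp : n = p + 1
        · rw [hnp]; exact hval
        · rcases Nat.lt_trichotomy n p with h2 | rfl | h2
          · rw [hℓ.1 n h2, h.1.1 n h2]
          · rw [hℓ.2, h.1.2]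
          · rw [← h1' n (by omega)]; exact hw0off n hnp
      · refine Or.inr ⟨p, h.1, fun he => hval (he.symm), fun n hn => ?_⟩
        rcases Nat.lt_trichotomy n p with h2 | rfl | h2
        · rw [h.1.1 n h2, ← hℓ.1 n h2]
        · rw [h.1.2, ← hℓ.2]
        · rw [← h1' n (by omega), hw0off n hn]
  · rintro ⟨⟨s, hs⟩, hnEq, ⟨w, hwmem⟩, hwA, hwB⟩
    have hwA' : w = (u : Bd d) ∨ BEdge (u : Bd d) w := hwA
    have hps : p ≤ s := hs.ge_of_not_eqF hnEq
    rcases Nat.eq_or_lt_of_le hps with he | hlt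
    · rwa [← he] at hs
    exfalso
    have hwspine : SpineAt w s ∧ ∀ n, n ≠ s + 1 → w n = (u : Bd d) n := by
      rcases hwA' with he | ⟨t, ht⟩
      · rw [he]; exact ⟨hs.1, fun n _ => rfl⟩
      · have hts : t = s := ht.1.unique hd hs.1
        rw [hts] at ht
        exact ⟨ht.spineAt_other, fun n hn => (ht.2.2 n hn).symm⟩
    set w₁ : Bd d := fun n => if n < p then -1 else if n = p then 0 else w n with hw₁def
    have hw₁p : SpineAt w₁ p := by
      constructor
      · intro i hi; simp [hw₁def, hi]
      · simp [hw₁def]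
    have hw₁off : ∀ n, p + 1 ≤ n → w₁ n = w n := by
      intro n hn
      simp only [hw₁def]
      rw [if_neg (by omega), if_neg (by omega)]
    have hw₁mem : w₁ ∈ Cof ζ :=
      mem_Cof_of_cofinal hwmem ⟨p+1, fun n hn => (hw₁off n hn).symm⟩
    have hb12 : BEdgeAt w₁ (Function.update w₁ (p+1) (w₁ (p+1) + 1)) p := by
      refine ⟨hw₁p, ?_, fun n hn => (Function.update_of_ne hn _ _).symm⟩
      rw [Function.update_self]
      intro hcon
      have h10 : (1 : ZMod d) = 0 := by linear_combination -hcon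
      exact one_ne_zero' hd h10
    have hw₂mem : Function.update w₁ (p+1) (w₁ (p+1) + 1) ∈ Cof ζ :=
      mem_Cof_of_cofinal hw₁mem hb12.eqF.cofinal
    have hres := hwB ⟨w₁, hw₁mem⟩ (fun n hn => (hw₁off n hn).symm) ⟨p, hw₁p⟩
      ⟨⟨Function.update w₁ (p+1) (w₁ (p+1) + 1), hw₂mem⟩, ⟨p, hb12⟩,
        hb12.not_eqF (le_refl _)⟩
    have hres' : w₁ = (u : Bd d) ∨ BEdge (u : Bd d) w₁ := hres
    have hup : (u : Bd d) p = -1 := hs.1.1 p hlt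
    rcases hres' with he | ⟨t, ht⟩
    · apply neg_one_ne_zero' hd
      rw [← hup, ← he]
      exact hw₁p.2
    · have hts : t = s := ht.1.unique hd hs.1
      rw [hts] at ht
      apply neg_one_ne_zero' hd
      rw [← hup]
      have h3 : (u : Bd d) p = w₁ p := ht.2.2 p (by omega)
      rw [h3]
      exact hw₁p.2

end SpinalAux
namespace SpinalAux

variable {d m : ℕ} {ω : ℕ → ((Fin m → ZMod d) →+ ZMod d)}

/-! ### The recursion describing `EqF (p+2)` -/

lemma eqF_succ_iff (hd : 3 ≤ d) {ζ : Bd d} (p : ℕ) (x y : ↥(Cof ζ)) :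
    EqF (p+2) (x : Bd d) (y : Bd d) ↔
      Relation.EqvGen
        (fun a b : ↥(Cof ζ) => EqF (p+1) (a : Bd d) (b : Bd d) ∨
          BEdgeAt (a : Bd d) (b : Bd d) p) x y := by
  constructor
  · intro h
    set u' : Bd d := fun n => if n < p then -1 else if n = p then 0 else (x : Bd d) n
      with hu'def
    have hu'sp : SpineAt u' p := by
      refine ⟨fun i hi => ?_, ?_⟩
      · simp [hu'def, hi]
      · simp [hu'def]
    have hu'off : ∀ n, p + 1 ≤ n → u' n = (x : Bd d) n := by
      intro n hn
      simp only [hu'def]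
      rw [if_neg (by omega), if_neg (by omega)]
    have hxu' : EqF (p+1) (x : Bd d) u' := fun n hn => (hu'off n hn).symm
    have hu'mem : u' ∈ Cof ζ := mem_Cof_of_cofinal x.2 hxu'.cofinal
    set u'' : Bd d := Function.update u' (p+1) ((y : Bd d) (p+1)) with hu''def
    have hu''off : ∀ n, n ≠ p + 1 → u'' n = u' n :=
      fun n hn => Function.update_of_ne hn _ _
    have hu''val : u'' (p+1) = (y : Bd d) (p+1) := Function.update_self _ _ _
    have hu''y : EqF (p+1) u'' (y : Bd d) := by
      intro n hn
      by_cases hne : n = p + 1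
      · rw [hne]; exact hu''val
      · rw [hu''off n hne, hu'off n hn]
        exact h n (by omega)
    have hu''mem : u'' ∈ Cof ζ :=
      mem_Cof_of_cofinal hu'mem ⟨p+2, fun n hn => (hu''off n (by omega)).symm⟩
    refine Relation.EqvGen.trans _ ⟨u', hu'mem⟩ _
      (Relation.EqvGen.rel _ _ (Or.inl hxu')) ?_
    refine Relation.EqvGen.trans _ ⟨u'', hu''mem⟩ _ ?_
      (Relation.EqvGen.rel _ _ (Or.inl hu''y))
    by_cases hval : u' (p+1) = (y : Bd d) (p+1)
    · have : u'' = u' := by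
        funext n
        by_cases hn : n = p + 1
        · rw [hn, hu''val, hval]
        · exact hu''off n hn
      have hxx : (⟨u', hu'mem⟩ : ↥(Cof ζ)) = ⟨u'', hu''mem⟩ := Subtype.ext this.symm
      rw [hxx]
      exact Relation.EqvGen.refl _
    · refine Relation.EqvGen.rel _ _ (Or.inr ⟨hu'sp, ?_, fun n hn => (hu''off n hn).symm⟩)
      show u' (p+1) ≠ u'' (p+1)
      rw [hu''val]; exact hval
  · intro h
    induction h with
    | rel a b hab =>
        rcases hab with h' | h'
        · exact h'.mono (by omega)
        · exact h'.eqF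
    | refl a => exact EqF.refl _ _
    | symm a b _ ih => exact ih.symm'
    | trans a b c _ _ ih1 ih2 => exact ih1.trans' ih2

lemma eqvGen_transport {α β : Type*} (e : α → β) {R : α → α → Prop} {R' : β → β → Prop}
    (h : ∀ a b, R a b → R' (e a) (e b)) {a b : α} (hab : Relation.EqvGen R a b) :
    Relation.EqvGen R' (e a) (e b) := by
  induction hab with
  | rel a b hab => exact Relation.EqvGen.rel _ _ (h a b hab)
  | refl a => exact Relation.EqvGen.refl _
  | symm a b _ ih => exact Relation.EqvGen.symm _ _ ih
  | trans a b c _ _ ih1 ih2 => exact Relation.EqvGen.trans _ _ _ ih1 ih2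

/-! ### Transport of the structure along a multiplicity-preserving bijection -/

section Transport

variable {ξ η : Bd d} (φ : ↥(Cof ξ) ≃ ↥(Cof η))

def PresMult (φ : ↥(Cof ξ) ≃ ↥(Cof η)) : Prop :=
  ∀ u v : ↥(Cof ξ), mult d m ω (u : Bd d) (v : Bd d)
    = mult d m ω (φ u : Bd d) (φ v : Bd d)

lemma PresMult.symm {φ : ↥(Cof ξ) ≃ ↥(Cof η)} (hmult : PresMult (ω := ω) φ) :
    PresMult (ω := ω) φ.symm := by
  intro u v
  have := hmult (φ.symm u) (φ.symm v)
  rw [φ.apply_symm_apply, φ.apply_symm_apply] at this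
  exact this.symm

lemma pres_ne (u v : ↥(Cof ξ)) :
    (u : Bd d) ≠ (v : Bd d) ↔ (φ u : Bd d) ≠ (φ v : Bd d) := by
  rw [ne_eq, ne_eq, ← Subtype.ext_iff, ← Subtype.ext_iff]
  exact not_congr ⟨fun h => by rw [h], fun h => φ.injective h⟩

variable (hmult : PresMult (ω := ω) φ)
include hmult

lemma pres_spine (hd : 3 ≤ d) (hω : InOmega d m ω) (u : ↥(Cof ξ)) :
    Spine (u : Bd d) ↔ Spine (φ u : Bd d) :=
  spine_iff_spine_of_mult_self_eq hd hω (hmult u u)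

lemma pres_bedge_mp (hd : 3 ≤ d) (hω : InOmega d m ω) (u v : ↥(Cof ξ))
    (h : BEdge (u : Bd d) (v : Bd d)) : BEdge (φ u : Bd d) (φ v : Bd d) := by
  have hne : (u : Bd d) ≠ (v : Bd d) := h.ne
  have hpos : 0 < mult d m ω (u : Bd d) (v : Bd d) := mult_pos_of_BEdge hd hω h
  have hne' : (φ u : Bd d) ≠ (φ v : Bd d) := (pres_ne φ u v).1 hne
  have hpos' : 0 < mult d m ω (φ u : Bd d) (φ v : Bd d) := hmult u v ▸ hpos
  rw [bedge_char hd hω hne hpos] at h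
  rw [bedge_char hd hω hne' hpos']
  obtain ⟨hsu, hsv, hall⟩ := h
  refine ⟨(pres_spine φ hmult hd hω u).1 hsu, (pres_spine φ hmult hd hω v).1 hsv, ?_⟩
  intro w hwu hwv h1 h2
  have hwmem : w ∈ Cof η := by
    rcases edge_of_mult_pos hd hω (Ne.symm hwu) h1 with ha | hb
    · exact mem_Cof_of_cofinal (φ u).2 ha.cofinal
    · exact mem_Cof_of_cofinal (φ u).2 hb.cofinal
  set w' : ↥(Cof ξ) := φ.symm ⟨w, hwmem⟩ with hw'def
  have hφw' : (φ w' : Bd d) = w := by rw [hw'def, φ.apply_symm_apply]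
  have e1 : 0 < mult d m ω (u : Bd d) (w' : Bd d) := by
    rw [hmult u w', hφw']; exact h1
  have e2 : 0 < mult d m ω (v : Bd d) (w' : Bd d) := by
    rw [hmult v w', hφw']; exact h2
  have hne1 : (w' : Bd d) ≠ (u : Bd d) := by
    intro hcon
    apply hwu
    rw [← hφw']
    exact congrArg _ (congrArg _ (Subtype.ext hcon))
  have hne2 : (w' : Bd d) ≠ (v : Bd d) := by
    intro hcon
    apply hwv
    rw [← hφw']
    exact congrArg _ (congrArg _ (Subtype.ext hcon))
  have := hall (w' : Bd d) hne1 hne2 e1 e2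
  rw [pres_spine φ hmult hd hω w', hφw'] at this
  exact this

lemma pres_bedge (hd : 3 ≤ d) (hω : InOmega d m ω) (u v : ↥(Cof ξ)) :
    BEdge (u : Bd d) (v : Bd d) ↔ BEdge (φ u : Bd d) (φ v : Bd d) := by
  constructor
  · exact pres_bedge_mp φ hmult hd hω u v
  · intro h
    have := pres_bedge_mp φ.symm hmult.symm hd hω (φ u) (φ v) h
    rwa [φ.symm_apply_apply, φ.symm_apply_apply] at this

lemma pres_aedge (hd : 3 ≤ d) (hω : InOmega d m ω) (u v : ↥(Cof ξ)) :
    AEdge (u : Bd d) (v : Bd d) ↔ AEdge (φ u : Bd d) (φ v : Bd d) := by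
  constructor
  · intro h
    have hne' : (φ u : Bd d) ≠ (φ v : Bd d) := (pres_ne φ u v).1 h.ne
    have hpos' : 0 < mult d m ω (φ u : Bd d) (φ v : Bd d) :=
      hmult u v ▸ mult_pos_of_AEdge hd hω h
    rcases edge_of_mult_pos hd hω hne' hpos' with h' | h'
    · exact h'
    · exact absurd ((pres_bedge φ hmult hd hω u v).2 h')
        (fun hb => not_AEdge_and_BEdge h hb)
  · intro h
    have hne : (u : Bd d) ≠ (v : Bd d) := (pres_ne φ u v).2 h.ne
    have hpos : 0 < mult d m ω (u : Bd d) (v : Bd d) := by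
      rw [hmult u v]; exact mult_pos_of_AEdge hd hω h
    rcases edge_of_mult_pos hd hω hne hpos with h' | h'
    · exact h'
    · exact absurd ((pres_bedge φ hmult hd hω u v).1 h')
        (fun hb => not_AEdge_and_BEdge h hb)

end Transport

end SpinalAux
namespace SpinalAux

variable {d m : ℕ} {ω : ℕ → ((Fin m → ZMod d) →+ ZMod d)}

section Transport2

variable {ξ η : Bd d} (φ : ↥(Cof ξ) ≃ ↥(Cof η))
variable (hmult : PresMult (ω := ω) φ)
include hmult

lemma pres_bedgeAt_mp (hd : 3 ≤ d) (hω : InOmega d m ω) (p : ℕ)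
    (hEq : ∀ u v : ↥(Cof ξ), EqF (p+1) (u : Bd d) (v : Bd d) ↔
      EqF (p+1) (φ u : Bd d) (φ v : Bd d))
    (u v : ↥(Cof ξ)) (h : BEdgeAt (u : Bd d) (v : Bd d) p) :
    BEdgeAt (φ u : Bd d) (φ v : Bd d) p := by
  rw [bedgeAt_char hd p u v] at h
  rw [bedgeAt_char hd p (φ u) (φ v)]
  obtain ⟨h1, h2, w, hw, hB⟩ := h
  refine ⟨(pres_bedge φ hmult hd hω u v).1 h1,
    fun hc => h2 ((hEq u v).2 hc), ⟨φ w, ?_, ?_⟩⟩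
  · rcases hw with he | hb
    · exact Or.inl (congrArg _ (congrArg φ (Subtype.ext he)))
    · exact Or.inr ((pres_bedge φ hmult hd hω u w).1 hb)
  · intro w₁' hEqw hSp hBig
    set w₁ : ↥(Cof ξ) := φ.symm w₁' with hw₁def
    have hφ : φ w₁ = w₁' := φ.apply_symm_apply w₁'
    rw [← hφ] at hEqw hSp hBig ⊢
    have hEqw' : EqF (p+1) (w : Bd d) (w₁ : Bd d) := (hEq w w₁).2 hEqw
    have hSp' : Spine (w₁ : Bd d) := (pres_spine φ hmult hd hω w₁).2 hSp
    have hBig' : ∃ w₂ : ↥(Cof ξ), BEdge (w₁ : Bd d) (w₂ : Bd d) ∧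
        ¬ EqF (p+1) (w₁ : Bd d) (w₂ : Bd d) := by
      obtain ⟨w₂', hb2, hne2⟩ := hBig
      refine ⟨φ.symm w₂', ?_, ?_⟩
      · have := (pres_bedge φ.symm hmult.symm hd hω (φ w₁) w₂').1
        rw [φ.symm_apply_apply] at this
        exact this hb2
      · intro hc
        apply hne2
        rw [hφ]
        have h5 := (hEq w₁ (φ.symm w₂')).1 hc
        rw [hw₁def, φ.apply_symm_apply, φ.apply_symm_apply] at h5
        exact h5
    rcases hB w₁ hEqw' hSp' hBig' with he | hb
    · exact Or.inl (congrArg _ (congrArg φ (Subtype.ext he)))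
    · exact Or.inr ((pres_bedge φ hmult hd hω u w₁).1 hb)

lemma pres_eqF (hd : 3 ≤ d) (hω : InOmega d m ω) :
    ∀ p, ∀ u v : ↥(Cof ξ), EqF p (u : Bd d) (v : Bd d) ↔
      EqF p (φ u : Bd d) (φ v : Bd d) := by
  intro p
  induction p using Nat.strong_induction_on with
  | _ p IH =>
    match p with
    | 0 =>
        intro u v
        rw [eqF_zero_iff, eqF_zero_iff, ← Subtype.ext_iff, ← Subtype.ext_iff]
        exact ⟨fun h => by rw [h], fun h => φ.injective h⟩
    | 1 =>
        intro u v
        rw [eqF_one_iff, eqF_one_iff, ← Subtype.ext_iff, ← Subtype.ext_iff]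
        constructor
        · rintro (rfl | h)
          · exact Or.inl rfl
          · exact Or.inr ((pres_aedge φ hmult hd hω u v).1 h)
        · rintro (he | h)
          · exact Or.inl (φ.injective he)
          · exact Or.inr ((pres_aedge φ hmult hd hω u v).2 h)
    | (p+2) =>
        intro u v
        have hEq : ∀ u v : ↥(Cof ξ), EqF (p+1) (u : Bd d) (v : Bd d) ↔
            EqF (p+1) (φ u : Bd d) (φ v : Bd d) := IH (p+1) (by omega)
        have hEqS : ∀ u v : ↥(Cof η), EqF (p+1) (u : Bd d) (v : Bd d) ↔
            EqF (p+1) (φ.symm u : Bd d) (φ.symm v : Bd d) := by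
          intro u v
          have := hEq (φ.symm u) (φ.symm v)
          rw [φ.apply_symm_apply, φ.apply_symm_apply] at this
          exact this.symm
        rw [eqF_succ_iff hd p u v, eqF_succ_iff hd p (φ u) (φ v)]
        constructor
        · intro h
          exact eqvGen_transport φ
            (fun a b hab => by
              rcases hab with h' | h'
              · exact Or.inl ((hEq a b).1 h')
              · exact Or.inr (pres_bedgeAt_mp φ hmult hd hω p hEq a b h')) h
        · intro h
          have := eqvGen_transport
            (R' := fun a b : ↥(Cof ξ) => EqF (p+1) (a : Bd d) (b : Bd d) ∨
              BEdgeAt (a : Bd d) (b : Bd d) p) φ.symm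
            (fun a b hab => by
              rcases hab with h' | h'
              · exact Or.inl ((hEqS a b).1 h')
              · exact Or.inr (pres_bedgeAt_mp φ.symm hmult.symm hd hω p hEqS a b h')) h
          rwa [φ.symm_apply_apply, φ.symm_apply_apply] at this

end Transport2

/-! ### Detecting letters and runs -/

def LevLe {ζ : Bd d} (k : ℕ) (x : ↥(Cof ζ)) : Prop :=
  ∃ w : ↥(Cof ζ), BEdge (x : Bd d) (w : Bd d) ∧ EqF (k+2) (x : Bd d) (w : Bd d)

lemma levLe_iff (hd : 3 ≤ d) {ζ : Bd d} {x : ↥(Cof ζ)} {r : ℕ}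
    (hr : SpineAt (x : Bd d) r) (k : ℕ) : LevLe k x ↔ r ≤ k := by
  constructor
  · rintro ⟨w, ⟨s, hs⟩, he⟩
    have hsr : s = r := hs.1.unique hd hr
    rw [hsr] at hs
    by_contra hc
    exact hs.2.1 (he (r+1) (by omega))
  · intro hk
    have hb : BEdgeAt (x : Bd d)
        (Function.update (x : Bd d) (r+1) ((x : Bd d) (r+1) + 1)) r := by
      refine ⟨hr, ?_, fun n hn => (Function.update_of_ne hn _ _).symm⟩
      rw [Function.update_self]
      intro hcon
      exact one_ne_zero' hd (by linear_combination -hcon)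
    have hmem : Function.update (x : Bd d) (r+1) ((x : Bd d) (r+1) + 1) ∈ Cof ζ :=
      mem_Cof_of_cofinal x.2 hb.eqF.cofinal
    exact ⟨⟨_, hmem⟩, ⟨r, hb⟩, hb.eqF.mono (by omega)⟩

lemma spineAt_detect (hd : 3 ≤ d) {ζ : Bd d} (x : ↥(Cof ζ)) (p : ℕ) :
    SpineAt (x : Bd d) p ↔
      (Spine (x : Bd d) ∧ LevLe p x ∧ ∀ k, k < p → ¬ LevLe k x) := by
  constructor
  · intro h
    exact ⟨⟨p, h⟩, (levLe_iff hd h p).2 (le_refl p),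
      fun k hk hc => by have := (levLe_iff hd h k).1 hc; omega⟩
  · rintro ⟨⟨r, hr⟩, h1, h2⟩
    have hrp : r ≤ p := (levLe_iff hd hr p).1 h1
    rcases Nat.eq_or_lt_of_le hrp with he | hlt
    · exact he ▸ hr
    · exact absurd ((levLe_iff hd hr r).2 (le_refl r)) (h2 r hlt)

lemma zero_detect (hd : 3 ≤ d) {ζ : Bd d} (x : ↥(Cof ζ)) (p : ℕ) :
    (x : Bd d) p = 0 ↔
      ∃ v : ↥(Cof ζ), EqF p (v : Bd d) (x : Bd d) ∧ SpineAt (v : Bd d) p := by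
  constructor
  · intro h
    set v : Bd d := fun n => if n < p then -1 else (x : Bd d) n with hvdef
    have hvoff : ∀ n, p ≤ n → v n = (x : Bd d) n := by
      intro n hn; simp only [hvdef]; rw [if_neg (by omega)]
    have hvsp : SpineAt v p := by
      refine ⟨fun i hi => ?_, ?_⟩
      · simp [hvdef, hi]
      · rw [hvoff p (le_refl p)]; exact h
    have hvmem : v ∈ Cof ζ :=
      mem_Cof_of_cofinal x.2 (EqF.cofinal (p := p) (fun n hn => (hvoff n hn).symm))
    exact ⟨⟨v, hvmem⟩, hvoff, hvsp⟩
  · rintro ⟨v, he, hsp⟩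
    rw [← he p (le_refl p)]
    exact hsp.2

lemma endsIn_detect (hd : 3 ≤ d) {ζ : Bd d} (x : ↥(Cof ζ)) (p r : ℕ)
    (hxp : (x : Bd d) p = 0) :
    EndsIn d (x : Bd d) p r ↔
      (r ≤ p ∧ ∃ v : ↥(Cof ζ), EqF (p - r) (v : Bd d) (x : Bd d) ∧
        SpineAt (v : Bd d) p) := by
  constructor
  · rintro ⟨hrp, hrun⟩
    refine ⟨hrp, ?_⟩
    set v : Bd d := fun n => if n < p - r then -1 else (x : Bd d) n with hvdef
    have hvoff : ∀ n, p - r ≤ n → v n = (x : Bd d) n := by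
      intro n hn; simp only [hvdef]; rw [if_neg (by omega)]
    have hvsp : SpineAt v p := by
      refine ⟨fun i hi => ?_, ?_⟩
      · by_cases h2 : i < p - r
        · simp [hvdef, h2]
        · rw [hvoff i (by omega)]
          rw [hrun i (by omega) hi]
          exact dcast_sub_one hd
      · rw [hvoff p (by omega)]; exact hxp
    have hvmem : v ∈ Cof ζ :=
      mem_Cof_of_cofinal x.2 (EqF.cofinal (p := p - r) (fun n hn => (hvoff n hn).symm))
    exact ⟨⟨v, hvmem⟩, hvoff, hvsp⟩
  · rintro ⟨hrp, v, he, hsp⟩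
    refine ⟨hrp, fun i hi1 hi2 => ?_⟩
    rw [← he i hi1, hsp.1 i hi2, dcast_sub_one hd]

section Transport3

variable {ξ η : Bd d} (φ : ↥(Cof ξ) ≃ ↥(Cof η))
variable (hmult : PresMult (ω := ω) φ)
include hmult

lemma pres_levLe (hd : 3 ≤ d) (hω : InOmega d m ω) (k : ℕ) (x : ↥(Cof ξ)) :
    LevLe k x ↔ LevLe k (φ x) := by
  constructor
  · rintro ⟨w, hb, he⟩
    exact ⟨φ w, (pres_bedge φ hmult hd hω x w).1 hb, (pres_eqF φ hmult hd hω (k+2) x w).1 he⟩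
  · rintro ⟨w, hb, he⟩
    refine ⟨φ.symm w, ?_, ?_⟩
    · have := (pres_bedge φ.symm hmult.symm hd hω (φ x) w).1 hb
      rwa [φ.symm_apply_apply] at this
    · have := (pres_eqF φ.symm hmult.symm hd hω (k+2) (φ x) w).1 he
      rwa [φ.symm_apply_apply] at this

lemma pres_spineAt (hd : 3 ≤ d) (hω : InOmega d m ω) (p : ℕ) (x : ↥(Cof ξ)) :
    SpineAt (x : Bd d) p ↔ SpineAt (φ x : Bd d) p := by
  rw [spineAt_detect hd x p, spineAt_detect hd (φ x) p,
    pres_spine φ hmult hd hω x]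
  constructor
  · rintro ⟨h1, h2, h3⟩
    exact ⟨h1, (pres_levLe φ hmult hd hω p x).1 h2,
      fun k hk hc => h3 k hk ((pres_levLe φ hmult hd hω k x).2 hc)⟩
  · rintro ⟨h1, h2, h3⟩
    exact ⟨h1, (pres_levLe φ hmult hd hω p x).2 h2,
      fun k hk hc => h3 k hk ((pres_levLe φ hmult hd hω k x).1 hc)⟩

lemma pres_zero (hd : 3 ≤ d) (hω : InOmega d m ω) (p : ℕ) (x : ↥(Cof ξ)) :
    (x : Bd d) p = 0 ↔ (φ x : Bd d) p = 0 := by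
  rw [zero_detect hd x p, zero_detect hd (φ x) p]
  constructor
  · rintro ⟨v, he, hsp⟩
    exact ⟨φ v, (pres_eqF φ hmult hd hω p v x).1 he, (pres_spineAt φ hmult hd hω p v).1 hsp⟩
  · rintro ⟨v, he, hsp⟩
    refine ⟨φ.symm v, ?_, ?_⟩
    · have := (pres_eqF φ.symm hmult.symm hd hω p v (φ x)).1 he
      rwa [φ.symm_apply_apply] at this
    · exact (pres_spineAt φ.symm hmult.symm hd hω p v).1 hsp

lemma pres_endsIn (hd : 3 ≤ d) (hω : InOmega d m ω) (p r : ℕ) (x : ↥(Cof ξ))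
    (hxp : (x : Bd d) p = 0) :
    EndsIn d (x : Bd d) p r ↔ EndsIn d (φ x : Bd d) p r := by
  have hxp' : (φ x : Bd d) p = 0 := (pres_zero φ hmult hd hω p x).1 hxp
  rw [endsIn_detect hd x p r hxp, endsIn_detect hd (φ x) p r hxp']
  constructor
  · rintro ⟨h1, v, he, hsp⟩
    exact ⟨h1, φ v, (pres_eqF φ hmult hd hω (p-r) v x).1 he,
      (pres_spineAt φ hmult hd hω p v).1 hsp⟩
  · rintro ⟨h1, v, he, hsp⟩
    refine ⟨h1, φ.symm v, ?_, ?_⟩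
    · have := (pres_eqF φ.symm hmult.symm hd hω (p-r) v (φ x)).1 he
      rwa [φ.symm_apply_apply] at this
    · exact (pres_spineAt φ.symm hmult.symm hd hω p v).1 hsp

lemma compatible_of_presMult (hd : 3 ≤ d) (hω : InOmega d m ω) :
    Compatible d ξ ((φ ⟨ξ, self_mem_Cof ξ⟩ : ↥(Cof η)) : Bd d) := by
  constructor
  · intro n
    exact pres_zero φ hmult hd hω n ⟨ξ, self_mem_Cof ξ⟩
  · intro p hp r
    exact pres_endsIn φ hmult hd hω p r ⟨ξ, self_mem_Cof ξ⟩ hp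

end Transport3

end SpinalAux
namespace SpinalAux

variable {d m : ℕ} {ω : ℕ → ((Fin m → ZMod d) →+ ZMod d)}

/-! ### The letterwise recoding maps -/

/-- `Ctx u n` : position `n` is followed by a (possibly empty) run of `-1`'s ending
at a `0`. -/
def Ctx (u : Bd d) (n : ℕ) : Prop :=
  ∃ p, n < p ∧ u p = 0 ∧ ∀ i, n < i → i < p → u i = -1

/-- A family of letter bijections: the `A`'s fix `0` and `-1`, the `B`'s fix `0`. -/
structure GoodPair (d : ℕ) where
  A : ℕ → (ZMod d ≃ ZMod d)
  B : ℕ → (ZMod d ≃ ZMod d)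
  hA0 : ∀ n, A n 0 = 0
  hA1 : ∀ n, A n (-1) = -1
  hB0 : ∀ n, B n 0 = 0

open scoped Classical in
noncomputable def PhiMap (G : GoodPair d) (u : Bd d) : Bd d :=
  fun n => if Ctx u n then G.A n (u n) else G.B n (u n)

noncomputable def GoodPair.symmPair (G : GoodPair d) : GoodPair d where
  A := fun n => (G.A n).symm
  B := fun n => (G.B n).symm
  hA0 := fun n => (Equiv.symm_apply_eq _).2 (G.hA0 n).symm
  hA1 := fun n => (Equiv.symm_apply_eq _).2 (G.hA1 n).symm
  hB0 := fun n => (Equiv.symm_apply_eq _).2 (G.hB0 n).symm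

lemma GoodPair.symmPair_symmPair (G : GoodPair d) : G.symmPair.symmPair = G := by
  cases G
  simp only [symmPair, Equiv.symm_symm]

lemma phiMap_apply_ctx (G : GoodPair d) {u : Bd d} {n : ℕ} (h : Ctx u n) :
    PhiMap G u n = G.A n (u n) := by
  simp only [PhiMap, if_pos h]

lemma phiMap_apply_not_ctx (G : GoodPair d) {u : Bd d} {n : ℕ} (h : ¬ Ctx u n) :
    PhiMap G u n = G.B n (u n) := by
  simp only [PhiMap, if_neg h]

lemma phiMap_zero_iff (G : GoodPair d) (u : Bd d) (n : ℕ) :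
    PhiMap G u n = 0 ↔ u n = 0 := by
  by_cases h : Ctx u n
  · rw [phiMap_apply_ctx G h]
    constructor
    · intro hh
      have := (G.A n).injective (hh.trans (G.hA0 n).symm)
      exact this
    · intro hh; rw [hh]; exact G.hA0 n
  · rw [phiMap_apply_not_ctx G h]
    constructor
    · intro hh
      exact (G.B n).injective (hh.trans (G.hB0 n).symm)
    · intro hh; rw [hh]; exact G.hB0 n

lemma ctx_congr {u v : Bd d} {n : ℕ} (h : ∀ k, n < k → u k = v k) :
    Ctx u n ↔ Ctx v n := by
  constructor
  · rintro ⟨p, h1, h2, h3⟩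
    exact ⟨p, h1, by rw [← h p h1]; exact h2,
      fun i hi1 hi2 => by rw [← h i hi1]; exact h3 i hi1 hi2⟩
  · rintro ⟨p, h1, h2, h3⟩
    exact ⟨p, h1, by rw [h p h1]; exact h2,
      fun i hi1 hi2 => by rw [h i hi1]; exact h3 i hi1 hi2⟩

lemma phiMap_ctx_iff (G : GoodPair d) (u : Bd d) (n : ℕ) :
    Ctx (PhiMap G u) n ↔ Ctx u n := by
  constructor
  · rintro ⟨p, h1, h2, h3⟩
    refine ⟨p, h1, (phiMap_zero_iff G u p).1 h2, ?_⟩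
    -- downward induction on `p - i`
    have key : ∀ k, ∀ i, n < i → i < p → p - i ≤ k → u i = -1 := by
      intro k
      induction k with
      | zero => intro i _ hi2 hk; omega
      | succ k ih =>
          intro i hi1 hi2 hk
          have hictx : Ctx u i := by
            refine ⟨p, hi2, (phiMap_zero_iff G u p).1 h2, ?_⟩
            intro j hj1 hj2
            exact ih j (by omega) hj2 (by omega)
          have := h3 i hi1 hi2
          rw [phiMap_apply_ctx G hictx] at this
          have := (G.A i).injective (this.trans (G.hA1 i).symm)
          exact this
    exact fun i hi1 hi2 => key p i hi1 hi2 (by omega)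
  · rintro ⟨p, h1, h2, h3⟩
    refine ⟨p, h1, (phiMap_zero_iff G u p).2 h2, ?_⟩
    intro i hi1 hi2
    have hictx : Ctx u i := ⟨p, hi2, h2, fun j hj1 hj2 => h3 j (by omega) hj2⟩
    rw [phiMap_apply_ctx G hictx, h3 i hi1 hi2]
    exact G.hA1 i

lemma phiMap_leftInverse (G : GoodPair d) (u : Bd d) :
    PhiMap G.symmPair (PhiMap G u) = u := by
  funext n
  by_cases h : Ctx u n
  · rw [phiMap_apply_ctx G.symmPair ((phiMap_ctx_iff G u n).2 h),
      phiMap_apply_ctx G h]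
    exact (G.A n).symm_apply_apply (u n)
  · rw [phiMap_apply_not_ctx G.symmPair
      (fun hc => h ((phiMap_ctx_iff G u n).1 hc)),
      phiMap_apply_not_ctx G h]
    exact (G.B n).symm_apply_apply (u n)

noncomputable def PhiEquiv (G : GoodPair d) : Bd d ≃ Bd d where
  toFun := PhiMap G
  invFun := PhiMap G.symmPair
  left_inv := phiMap_leftInverse G
  right_inv := fun u => by
    have := phiMap_leftInverse G.symmPair u
    rwa [GoodPair.symmPair_symmPair] at this

lemma phiMap_congr_tail (G : GoodPair d) {u v : Bd d} {n : ℕ}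
    (h : ∀ k, n < k → u k = v k) (hn : u n = v n) : PhiMap G u n = PhiMap G v n := by
  by_cases hc : Ctx u n
  · rw [phiMap_apply_ctx G hc, phiMap_apply_ctx G ((ctx_congr h).1 hc), hn]
  · rw [phiMap_apply_not_ctx G hc,
      phiMap_apply_not_ctx G (fun hcc => hc ((ctx_congr h).2 hcc)), hn]

lemma phiMap_cofinal (G : GoodPair d) {u v : Bd d} (h : Cofinal u v) :
    Cofinal (PhiMap G u) (PhiMap G v) := by
  obtain ⟨N, hN⟩ := h
  exact ⟨N, fun n hn =>
    phiMap_congr_tail G (fun k hk => hN k (by omega)) (hN n hn)⟩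

lemma phiMap_spineAt (G : GoodPair d) {u : Bd d} {r : ℕ} (h : SpineAt u r) :
    SpineAt (PhiMap G u) r := by
  constructor
  · intro i hi
    have hictx : Ctx u i := ⟨r, hi, h.2, fun j hj1 hj2 => h.1 j hj2⟩
    rw [phiMap_apply_ctx G hictx, h.1 i hi]
    exact G.hA1 i
  · exact (phiMap_zero_iff G u r).2 h.2

lemma phiMap_spine_iff (G : GoodPair d) (u : Bd d) :
    Spine (PhiMap G u) ↔ Spine u := by
  constructor
  · rintro ⟨r, hr⟩
    have := phiMap_spineAt G.symmPair hr
    rw [phiMap_leftInverse G u] at this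
    exact ⟨r, this⟩
  · rintro ⟨r, hr⟩
    exact ⟨r, phiMap_spineAt G hr⟩

lemma phiMap_off_zero (G : GoodPair d) {u v : Bd d} (h : ∀ n, n ≠ 0 → u n = v n) :
    (∀ n, n ≠ 0 → PhiMap G u n = PhiMap G v n) ∧
      (u 0 = v 0 ↔ PhiMap G u 0 = PhiMap G v 0) := by
  constructor
  · intro n hn
    exact phiMap_congr_tail G (fun k hk => h k (by omega)) (h n hn)
  · have hctx : Ctx u 0 ↔ Ctx v 0 := ctx_congr (fun k hk => h k (by omega))
    by_cases hc : Ctx u 0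
    · rw [phiMap_apply_ctx G hc, phiMap_apply_ctx G (hctx.1 hc)]
      exact ⟨fun hh => by rw [hh], fun hh => (G.A 0).injective hh⟩
    · rw [phiMap_apply_not_ctx G hc, phiMap_apply_not_ctx G (fun hcc => hc (hctx.2 hcc))]
      exact ⟨fun hh => by rw [hh], fun hh => (G.B 0).injective hh⟩

lemma phiMap_off_spine (G : GoodPair d) {u v : Bd d} {r : ℕ} (hr : SpineAt u r)
    (h : ∀ n, n ≠ r + 1 → u n = v n) :
    (∀ n, n ≠ r + 1 → PhiMap G u n = PhiMap G v n) ∧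
      (u (r+1) = v (r+1) ↔ PhiMap G u (r+1) = PhiMap G v (r+1)) := by
  have hvr : SpineAt v r := by
    refine ⟨fun i hi => ?_, ?_⟩
    · rw [← h i (by omega)]; exact hr.1 i hi
    · rw [← h r (by omega)]; exact hr.2
  constructor
  · intro n hn
    rcases Nat.lt_trichotomy n r with h2 | rfl | h2
    · have hcu : Ctx u n := ⟨r, h2, hr.2, fun j hj1 hj2 => hr.1 j hj2⟩
      have hcv : Ctx v n := ⟨r, h2, hvr.2, fun j hj1 hj2 => hvr.1 j hj2⟩
      rw [phiMap_apply_ctx G hcu, phiMap_apply_ctx G hcv, hr.1 n h2,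
        hvr.1 n h2]
    · rw [(phiMap_zero_iff G u n).2 hr.2, ((phiMap_zero_iff G v n).2 hvr.2).symm]
    · exact phiMap_congr_tail G (fun k hk => h k (by omega)) (h n hn)
  · have hctx : Ctx u (r+1) ↔ Ctx v (r+1) := ctx_congr (fun k hk => h k (by omega))
    by_cases hc : Ctx u (r+1)
    · rw [phiMap_apply_ctx G hc, phiMap_apply_ctx G (hctx.1 hc)]
      exact ⟨fun hh => by rw [hh], fun hh => (G.A (r+1)).injective hh⟩
    · rw [phiMap_apply_not_ctx G hc,
        phiMap_apply_not_ctx G (fun hcc => hc (hctx.2 hcc))]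
      exact ⟨fun hh => by rw [hh], fun hh => (G.B (r+1)).injective hh⟩

end SpinalAux
namespace SpinalAux

variable {d m : ℕ} {ω : ℕ → ((Fin m → ZMod d) →+ ZMod d)}

/-! ### Coset counting -/

lemma card_coset_eq (hω : InOmega d m ω) (r : ℕ) {c c' : ZMod d}
    (h : c = 0 ↔ c' = 0) :
    Nat.card {b : Fin m → ZMod d // b ≠ 0 ∧ ω r b = c}
      = Nat.card {b : Fin m → ZMod d // b ≠ 0 ∧ ω r b = c'} := by
  by_cases hc : c = 0
  · rw [hc, h.1 hc]
  · have hc' : c' ≠ 0 := fun hh => hc (h.2 hh)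
    obtain ⟨b₀, hb₀⟩ := hω.1 r (c' - c)
    apply Nat.card_congr
    refine ⟨fun x => ⟨x.1 + b₀, ?_, ?_⟩, fun x => ⟨x.1 - b₀, ?_, ?_⟩, ?_, ?_⟩
    · intro hh
      apply hc'
      have : ω r (x.1 + b₀) = 0 := by rw [hh, map_zero]
      rw [map_add, x.2.2, hb₀] at this
      linear_combination this
    · rw [map_add, x.2.2, hb₀]; ring
    · intro hh
      apply hc
      have : ω r (x.1 - b₀) = 0 := by rw [hh, map_zero]
      rw [map_sub, x.2.2, hb₀] at this
      linear_combination this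
    · rw [map_sub, x.2.2, hb₀]; ring
    · intro x; apply Subtype.ext; simp
    · intro x; apply Subtype.ext; simp

lemma card_APart_eq_card (hd : 3 ≤ d) {u v u' v' : Bd d}
    (h : AEdge u v ↔ AEdge u' v') :
    Nat.card (APart d u v) = Nat.card (APart d u' v') := by
  by_cases ha : AEdge u v
  · rw [card_APart_of_AEdge hd ha, card_APart_of_AEdge hd (h.1 ha)]
  · rw [card_APart_of_not_AEdge hd ha, card_APart_of_not_AEdge hd (fun hh => ha (h.2 hh))]

/-! ### `PhiMap` preserves multiplicities -/

lemma mult_phiMap (hd : 3 ≤ d) (hω : InOmega d m ω) (G : GoodPair d) (u v : Bd d) :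
    mult d m ω u v = mult d m ω (PhiMap G u) (PhiMap G v) := by
  rw [mult_eq_parts hd hω, mult_eq_parts hd hω]
  have hAiff : AEdge u v ↔ AEdge (PhiMap G u) (PhiMap G v) := by
    constructor
    · intro h
      refine ⟨fun hh => h.1 ((phiMap_off_zero G h.2).2.2 hh), (phiMap_off_zero G h.2).1⟩
    · intro h
      have hoff : ∀ n, n ≠ 0 → u n = v n := by
        intro n hn
        have := (phiMap_off_zero G.symmPair (u := PhiMap G u) (v := PhiMap G v) h.2).1 n hn
        rwa [phiMap_leftInverse G u, phiMap_leftInverse G v] at this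
      exact ⟨fun hh => h.1 ((phiMap_off_zero G hoff).2.1 hh), hoff⟩
  congr 1
  · exact card_APart_eq_card hd hAiff
  · -- BPart cardinalities
    rcases Classical.em (Spine u) with ⟨r, hr⟩ | hns
    · have hr' : SpineAt (PhiMap G u) r := phiMap_spineAt G hr
      by_cases hoff : ∀ n, n ≠ r + 1 → u n = v n
      · have hoff' : ∀ n, n ≠ r + 1 → PhiMap G u n = PhiMap G v n :=
          (phiMap_off_spine G hr hoff).1
        rw [card_BPart_spine_off hd hr hoff, card_BPart_spine_off hd hr' hoff']
        apply card_coset_eq hω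
        constructor
        · intro hh
          have : u (r+1) = v (r+1) := by linear_combination -hh
          have h2 := (phiMap_off_spine G hr hoff).2.1 this
          linear_combination -h2
        · intro hh
          have : PhiMap G u (r+1) = PhiMap G v (r+1) := by linear_combination -hh
          have h2 := (phiMap_off_spine G hr hoff).2.2 this
          linear_combination -h2
      · have hoff' : ¬ ∀ n, n ≠ r + 1 → PhiMap G u n = PhiMap G v n := by
          intro hcon
          apply hoff
          intro n hn
          have := (phiMap_off_spine G.symmPair hr' hcon).1 n hn
          rwa [phiMap_leftInverse G u, phiMap_leftInverse G v] at this
        rw [card_BPart_spine_not_off hd hr hoff, card_BPart_spine_not_off hd hr' hoff']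
    · have hns' : ¬ Spine (PhiMap G u) := fun hh => hns ((phiMap_spine_iff G u).1 hh)
      rcases Classical.em (u = v) with rfl | hne
      · rw [card_BPart_not_spine_self hd hns rfl, card_BPart_not_spine_self hd hns' rfl]
      · have hne' : PhiMap G u ≠ PhiMap G v := by
          intro hh
          apply hne
          rw [← phiMap_leftInverse G u, ← phiMap_leftInverse G v, hh]
        rw [card_BPart_not_spine_ne hd hns hne, card_BPart_not_spine_ne hd hns' hne']

/-! ### Building a `GoodPair` from a compatibility -/

lemma ctx_neg_one_iff (hd : 3 ≤ d) {ξ η' : Bd d} (hcomp : Compatible d ξ η')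
    {n : ℕ} (hctx : Ctx ξ n) : (ξ n = -1 ↔ η' n = -1) := by
  obtain ⟨p, hnp, hz, hrun⟩ := hctx
  constructor
  · intro h
    have hE : EndsIn d ξ p (p - n) := by
      refine ⟨by omega, fun i hi1 hi2 => ?_⟩
      rw [dcast_sub_one hd]
      rcases Nat.eq_or_lt_of_le (show n ≤ i by omega) with he | hlt
      · rw [← he]; exact h
      · exact hrun i hlt hi2
    have := ((hcomp.2 p hz (p - n)).1 hE).2 n (by omega) (by omega)
    rw [dcast_sub_one hd] at this
    exact this
  · intro h
    have hE : EndsIn d η' p (p - n) := by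
      refine ⟨by omega, fun i hi1 hi2 => ?_⟩
      rw [dcast_sub_one hd]
      rcases Nat.eq_or_lt_of_le (show n ≤ i by omega) with he | hlt
      · rw [← he]; exact h
      · -- η' i = -1 for n < i < p, via compatibility applied to the run below p
        have hEi : EndsIn d ξ p (p - i) := by
          refine ⟨by omega, fun j hj1 hj2 => ?_⟩
          rw [dcast_sub_one hd]
          exact hrun j (by omega) hj2
        have := ((hcomp.2 p hz (p - i)).1 hEi).2 i (by omega) hi2
        rw [dcast_sub_one hd] at this
        exact this
    have := ((hcomp.2 p hz (p - n)).2 hE).2 n (by omega) (by omega)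
    rw [dcast_sub_one hd] at this
    exact this

noncomputable def goodPairOf (hd : 3 ≤ d) {ξ η' : Bd d} (hcomp : Compatible d ξ η') :
    GoodPair d := by
  classical
  refine
    { A := fun n => if Ctx ξ n then Equiv.swap (ξ n) (η' n) else Equiv.refl _
      B := fun n => Equiv.swap (ξ n) (η' n)
      hA0 := ?_, hA1 := ?_, hB0 := ?_ }
  · intro n
    show (if Ctx ξ n then Equiv.swap (ξ n) (η' n) else Equiv.refl (ZMod d)) 0 = 0
    by_cases hc : Ctx ξ n
    · rw [if_pos hc]
      by_cases h0 : ξ n = 0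
      · have h0' : η' n = 0 := (hcomp.1 n).1 h0
        rw [h0, h0', Equiv.swap_self]
        rfl
      · have h0' : η' n ≠ 0 := fun hh => h0 ((hcomp.1 n).2 hh)
        exact Equiv.swap_apply_of_ne_of_ne (Ne.symm h0) (Ne.symm h0')
    · rw [if_neg hc]; rfl
  · intro n
    show (if Ctx ξ n then Equiv.swap (ξ n) (η' n) else Equiv.refl (ZMod d)) (-1) = -1
    by_cases hc : Ctx ξ n
    · rw [if_pos hc]
      by_cases h1 : ξ n = -1
      · have h1' : η' n = -1 := (ctx_neg_one_iff hd hcomp hc).1 h1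
        rw [h1, h1', Equiv.swap_self]
        rfl
      · have h1' : η' n ≠ -1 := fun hh => h1 ((ctx_neg_one_iff hd hcomp hc).2 hh)
        exact Equiv.swap_apply_of_ne_of_ne (Ne.symm h1) (Ne.symm h1')
    · rw [if_neg hc]; rfl
  · intro n
    show Equiv.swap (ξ n) (η' n) 0 = 0
    by_cases h0 : ξ n = 0
    · have h0' : η' n = 0 := (hcomp.1 n).1 h0
      rw [h0, h0', Equiv.swap_self]
      rfl
    · have h0' : η' n ≠ 0 := fun hh => h0 ((hcomp.1 n).2 hh)
      exact Equiv.swap_apply_of_ne_of_ne (Ne.symm h0) (Ne.symm h0')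

lemma goodPairOf_maps (hd : 3 ≤ d) {ξ η' : Bd d} (hcomp : Compatible d ξ η') :
    PhiMap (goodPairOf hd hcomp) ξ = η' := by
  classical
  funext n
  by_cases hc : Ctx ξ n
  · rw [phiMap_apply_ctx _ hc]
    show (if Ctx ξ n then Equiv.swap (ξ n) (η' n) else Equiv.refl _) (ξ n) = η' n
    rw [if_pos hc]
    exact Equiv.swap_apply_left _ _
  · rw [phiMap_apply_not_ctx _ hc]
    exact Equiv.swap_apply_left _ _

end SpinalAux
/-- `Γ_ξ` and `Γ_η` are isomorphic as unrooted, undirected, unlabeled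
graphs (a multiplicity-preserving bijection `Cof(ξ) → Cof(η)`, with no condition on
roots) iff there exists `η' ∈ Cof(η)` with `ξ ∼ η'`. -/
theorem unrooted_iso_iff_compatible (d m : ℕ) (hd : 3 ≤ d) (hm : 1 ≤ m)
    (ω : ℕ → ((Fin m → ZMod d) →+ ZMod d)) (hω : InOmega d m ω) (ξ η : Bd d) :
    (∃ φ : ↥(Cof ξ) ≃ ↥(Cof η),
        ∀ u v : ↥(Cof ξ), mult d m ω ↑u ↑v = mult d m ω ↑(φ u) ↑(φ v)) ↔
      ∃ η' ∈ Cof η, Compatible d ξ η' := by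
  constructor
  · rintro ⟨φ, hmult⟩
    exact ⟨((φ ⟨ξ, self_mem_Cof ξ⟩ : ↥(Cof η)) : Bd d), (φ ⟨ξ, self_mem_Cof ξ⟩).2,
      SpinalAux.compatible_of_presMult φ hmult hd hω⟩
  · rintro ⟨η', hmem, hcomp⟩
    set G := SpinalAux.goodPairOf hd hcomp with hG
    set E := SpinalAux.PhiEquiv G with hE
    have hEξ : E ξ = η' := SpinalAux.goodPairOf_maps hd hcomp
    have hmemiff : ∀ x : Bd d, x ∈ Cof ξ ↔ E x ∈ Cof η := by
      intro x
      constructor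
      · intro hx
        have h1 : Cofinal ξ x := hx
        have h2 : Cofinal (E ξ) (E x) := SpinalAux.phiMap_cofinal G h1
        rw [hEξ] at h2
        exact SpinalAux.Cofinal.trans' hmem h2
      · intro hx
        have h1 : Cofinal η' (E x) :=
          SpinalAux.Cofinal.trans' (SpinalAux.Cofinal.symm' hmem) hx
        have h2 := SpinalAux.phiMap_cofinal G.symmPair h1
        have h3 : SpinalAux.PhiMap G.symmPair η' = ξ := by
          rw [← hEξ]; exact SpinalAux.phiMap_leftInverse G ξ
        have h4 : SpinalAux.PhiMap G.symmPair (E x) = x :=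
          SpinalAux.phiMap_leftInverse G x
        rw [h3, h4] at h2
        exact h2
    refine ⟨E.subtypeEquiv hmemiff, ?_⟩
    intro u v
    have hcoe : ∀ (x : ↥(Cof ξ)),
        ((E.subtypeEquiv hmemiff x : ↥(Cof η)) : Bd d) = E ↑x := fun x => rfl
    rw [hcoe u, hcoe v]
    exact SpinalAux.mult_phiMap hd hω G ↑u ↑v

end
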